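/- Let G ⊆ SL(3,ℂ) be the subgroup of matrices [[t⁻²,0,0],[s₀,t,0],[s₁,0,t]] with t ∈ ℂ ∖ {0} and s₀,s₁ ∈ ℂ. For any line ℓ of ℙ²(ℂ) with ℓ ≠ l_A, the orbit {g(ℓ) : g ∈ G} is exactly the set of lines ℓ' of ℙ²(ℂ) with ℓ' ≠ l_A and ℓ' ∩ l_A = ℓ ∩ l_A. In particular, the intersection point of a line with l_A is invariant under the action of G, and G acts transitively on the set of lines through any fixed point of l_A other than l_A itself. -/

import Mathlib

noncomputable section

/-- The complex projective plane `ℙ²(ℂ)`. -/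
abbrev P2 : Type := Projectivization ℂ (Fin 3 → ℂ)

/-- The group `SL(3,ℂ)`. -/
abbrev SL3 : Type := Matrix.SpecialLinearGroup (Fin 3) ℂ

/-- The induced action of `g ∈ SL(3,ℂ)` on `ℙ²(ℂ)`, via the linear action of `g`
on column vectors `(x0,x1,x2)ᵀ`. -/
def act (g : SL3) : P2 → P2 :=
  Projectivization.map (Matrix.SpecialLinearGroup.toLin' g).toLinearMap
    (Matrix.SpecialLinearGroup.toLin' g).injective

/-- The line `{[x0:x1:x2] ∈ ℙ²(ℂ) : b0·x0 + b1·x1 + b2·x2 = 0}` determined by the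
linear form with coefficients `b`. -/
def lineSet (b : Fin 3 → ℂ) : Set P2 :=
  {p : P2 | b 0 * p.rep 0 + b 1 * p.rep 1 + b 2 * p.rep 2 = 0}

/-- The line `l_A = {x0 = 0}`. -/
def lA : Set P2 := lineSet ![1, 0, 0]

/-- A subset of `ℙ²(ℂ)` is a line if it is the zero set of a nonzero linear form. -/
def IsLine (L : Set P2) : Prop := ∃ b : Fin 3 → ℂ, b ≠ 0 ∧ L = lineSet b

/-- The subgroup `G ⊆ SL(3,ℂ)` of matrices `[[t⁻²,0,0],[s₀,t,0],[s₁,0,t]]`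
with `t ≠ 0`, i.e. the pointwise stabilizer of `l_A`. -/
def Gset : Set SL3 :=
  {g : SL3 | ∃ t s₀ s₁ : ℂ, t ≠ 0 ∧
    (g : Matrix (Fin 3) (Fin 3) ℂ) = !![(t ^ 2)⁻¹, 0, 0; s₀, t, 0; s₁, 0, t]}

open Matrix Projectivization

lemma mem_lineSet (b v : Fin 3 → ℂ) (hv : v ≠ 0) :
    Projectivization.mk ℂ v hv ∈ lineSet b ↔ b ⬝ᵥ v = 0 := by
  obtain ⟨a, ha⟩ := Projectivization.exists_smul_eq_mk_rep ℂ v hv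
  have : (Projectivization.mk ℂ v hv).rep = (a : ℂ) • v := ha.symm
  simp only [lineSet, Set.mem_setOf_eq, this, Pi.smul_apply, smul_eq_mul, dotProduct,
    Fin.sum_univ_three]
  constructor
  · intro h
    have h2 : (a : ℂ) * (b 0 * v 0 + b 1 * v 1 + b 2 * v 2) = 0 := by linear_combination h
    rcases mul_eq_zero.mp h2 with h' | h'
    · exact absurd h' a.ne_zero
    · linear_combination h'
  · intro h; linear_combination (a : ℂ) * h

lemma act_mk (g : SL3) (v : Fin 3 → ℂ) (hv : v ≠ 0) :
    act g (Projectivization.mk ℂ v hv) =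
      Projectivization.mk ℂ ((g : Matrix (Fin 3) (Fin 3) ℂ) *ᵥ v)
        (fun h => hv (by
          have := (Matrix.SpecialLinearGroup.toLin' g).injective (a₁ := v) (a₂ := 0)
          simpa [Matrix.SpecialLinearGroup.toLin'_apply, Matrix.toLin'_apply, h] using this)) := by
  simp only [act, Projectivization.map_mk]
  congr 1

lemma image_lineSet (g : SL3) (h : Matrix (Fin 3) (Fin 3) ℂ)
    (hhg : h * (g : Matrix (Fin 3) (Fin 3) ℂ) = 1) (b : Fin 3 → ℂ) :
    act g '' lineSet b = lineSet (Matrix.vecMul b h) := by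
  have hgh : (g : Matrix (Fin 3) (Fin 3) ℂ) * h = 1 := by
    exact mul_eq_one_comm.mp hhg
  ext q
  induction q using Projectivization.ind with
  | h w hw =>
  constructor
  · rintro ⟨p, hp, heq⟩
    induction p using Projectivization.ind with
    | h v hv =>
    rw [← heq, act_mk, mem_lineSet]
    rw [mem_lineSet] at hp
    rw [Matrix.dotProduct_mulVec, Matrix.vecMul_vecMul, hhg, Matrix.vecMul_one]
    exact hp
  · intro hq
    rw [mem_lineSet] at hq
    have hv : h *ᵥ w ≠ 0 := by
      intro h0
      apply hw
      have : (g : Matrix (Fin 3) (Fin 3) ℂ) *ᵥ (h *ᵥ w) = w := by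
        rw [Matrix.mulVec_mulVec, hgh, Matrix.one_mulVec]
      rw [h0, Matrix.mulVec_zero] at this
      exact this.symm
    refine ⟨Projectivization.mk ℂ (h *ᵥ w) hv, ?_, ?_⟩
    · rw [mem_lineSet, Matrix.dotProduct_mulVec]
      exact hq
    · rw [act_mk]
      congr 1
      rw [Matrix.mulVec_mulVec, hgh, Matrix.one_mulVec]
lemma lineSet_smul {k : ℂ} (hk : k ≠ 0) (b : Fin 3 → ℂ) : lineSet (k • b) = lineSet b := by
  ext p
  induction p using Projectivization.ind with
  | h v hv =>
  rw [mem_lineSet, mem_lineSet, smul_dotProduct, smul_eq_mul, mul_eq_zero]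
  simp [hk]

lemma mem_lA_mk (v : Fin 3 → ℂ) (hv : v ≠ 0) :
    Projectivization.mk ℂ v hv ∈ lA ↔ v 0 = 0 := by
  rw [lA, mem_lineSet]
  simp [dotProduct, Fin.sum_univ_three]

lemma lA_coeffs (c : Fin 3 → ℂ) (h : lineSet c = lA) : c 1 = 0 ∧ c 2 = 0 := by
  have h1 : Projectivization.mk ℂ ![0,1,0] (by simp [funext_iff, Fin.forall_fin_succ]) ∈ lineSet c := by
    rw [h, mem_lA_mk]; simp
  have h2 : Projectivization.mk ℂ ![0,0,1] (by simp [funext_iff, Fin.forall_fin_succ]) ∈ lineSet c := by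
    rw [h, mem_lA_mk]; simp
  rw [mem_lineSet] at h1 h2
  simp [dotProduct, Fin.sum_univ_three] at h1 h2
  exact ⟨h1, h2⟩

lemma lineSet_eq_lA (c : Fin 3 → ℂ) (h1 : c 1 = 0) (h2 : c 2 = 0) (h0 : c 0 ≠ 0) :
    lineSet c = lA := by
  ext p
  induction p using Projectivization.ind with
  | h v hv =>
  rw [mem_lineSet, mem_lA_mk]
  simp [dotProduct, Fin.sum_univ_three, h1, h2, h0]

lemma inter_lA_eq {k : ℂ} (hk : k ≠ 0) (b c : Fin 3 → ℂ) (h1 : c 1 = k * b 1)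
    (h2 : c 2 = k * b 2) : lineSet c ∩ lA = lineSet b ∩ lA := by
  ext p
  induction p using Projectivization.ind with
  | h v hv =>
  simp only [Set.mem_inter_iff, mem_lineSet, mem_lA_mk]
  constructor
  · rintro ⟨hc, h0⟩
    refine ⟨?_, h0⟩
    simp only [dotProduct, Fin.sum_univ_three, h0, h1, h2, mul_zero, zero_add] at hc ⊢
    have : k * (b 1 * v 1 + b 2 * v 2) = 0 := by linear_combination hc
    rcases mul_eq_zero.mp this with h | h
    · exact absurd h hk
    · exact h
  · rintro ⟨hb, h0⟩
    refine ⟨?_, h0⟩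
    simp only [dotProduct, Fin.sum_univ_three, h0, h1, h2, mul_zero, zero_add] at hb ⊢
    linear_combination k * hb

lemma prop_of_inter (b c : Fin 3 → ℂ) (hb : ¬ (b 1 = 0 ∧ b 2 = 0))
    (hc : ¬ (c 1 = 0 ∧ c 2 = 0)) (h : lineSet c ∩ lA = lineSet b ∩ lA) :
    ∃ k : ℂ, k ≠ 0 ∧ c 1 = k * b 1 ∧ c 2 = k * b 2 := by
  have hvne : (![0, -(b 2), b 1] : Fin 3 → ℂ) ≠ 0 := by
    intro h0
    rw [funext_iff] at h0
    exact hb ⟨by simpa using h0 2, by simpa using h0 1⟩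
  have hP : Projectivization.mk ℂ ![0, -(b 2), b 1] hvne ∈ lineSet b ∩ lA := by
    refine ⟨?_, by rw [mem_lA_mk]; simp⟩
    rw [mem_lineSet]; simp [dotProduct, Fin.sum_univ_three]; ring
  rw [← h] at hP
  have hcross : c 1 * b 2 = c 2 * b 1 := by
    have := hP.1
    rw [mem_lineSet] at this
    simp [dotProduct, Fin.sum_univ_three] at this
    linear_combination -this
  by_cases hb1 : b 1 = 0
  · have hb2 : b 2 ≠ 0 := fun h2 => hb ⟨hb1, h2⟩
    refine ⟨c 2 / b 2, ?_, ?_, ?_⟩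
    · intro h0
      apply hc
      constructor
      · have : c 1 * b 2 = 0 := by rw [hcross, hb1, mul_zero]
        rcases mul_eq_zero.mp this with h' | h'
        · exact h'
        · exact absurd h' hb2
      · field_simp at h0; simpa using h0
    · rw [hb1, mul_zero]
      have : c 1 * b 2 = 0 := by rw [hcross, hb1, mul_zero]
      rcases mul_eq_zero.mp this with h' | h'
      · exact h'
      · exact absurd h' hb2
    · field_simp
  · refine ⟨c 1 / b 1, ?_, ?_, ?_⟩
    · intro h0
      apply hc
      constructor
      · field_simp at h0; simpa using h0
      · have : c 2 * b 1 = 0 := by rw [← hcross]; field_simp at h0; rw [h0]; ring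
        rcases mul_eq_zero.mp this with h' | h'
        · exact h'
        · exact absurd h' hb1
    · field_simp
    · rw [div_mul_eq_mul_div, eq_div_iff hb1]
      linear_combination - hcross
lemma gdet (t s₀ s₁ : ℂ) (ht : t ≠ 0) :
    Matrix.det !![(t ^ 2)⁻¹, 0, 0; s₀, t, 0; s₁, 0, t] = 1 := by
  rw [Matrix.det_fin_three]
  simp
  field_simp

lemma ginv (t s₀ s₁ : ℂ) (ht : t ≠ 0) :
    !![t ^ 2, 0, 0; -s₀ * t, t⁻¹, 0; -s₁ * t, 0, t⁻¹] *
      !![(t ^ 2)⁻¹, 0, 0; s₀, t, 0; s₁, 0, t] = 1 := by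
  ext i j
  fin_cases i <;> fin_cases j <;>
    simp [Matrix.mul_apply, Fin.sum_univ_three] <;> field_simp <;> ring

lemma gvecMul (t s₀ s₁ : ℂ) (b : Fin 3 → ℂ) :
    Matrix.vecMul b !![t ^ 2, 0, 0; -s₀ * t, t⁻¹, 0; -s₁ * t, 0, t⁻¹] =
      ![b 0 * t ^ 2 - b 1 * s₀ * t - b 2 * s₁ * t, t⁻¹ * b 1, t⁻¹ * b 2] := by
  funext j
  fin_cases j <;> simp [Matrix.vecMul, dotProduct, Fin.sum_univ_three] <;> ring

/-- for any line `ℓ ≠ l_A` of `ℙ²(ℂ)`, the `G`-orbit `{g(ℓ) : g ∈ G}` is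
exactly the set of lines `ℓ' ≠ l_A` with `ℓ' ∩ l_A = ℓ ∩ l_A`.  In particular the
intersection point with `l_A` is `G`-invariant and `G` acts transitively on the lines
other than `l_A` through any fixed point of `l_A`. -/
theorem stmt11 (L : Set P2) (hL : IsLine L) (hLA : L ≠ lA) :
    {L' : Set P2 | ∃ g ∈ Gset, L' = act g '' L} =
      {L' : Set P2 | IsLine L' ∧ L' ≠ lA ∧ L' ∩ lA = L ∩ lA} ∧
    ∀ g ∈ Gset, (act g '' L) ∩ lA = L ∩ lA := by
  obtain ⟨b, hb, rfl⟩ := hL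
  have hb12 : ¬ (b 1 = 0 ∧ b 2 = 0) := by
    rintro ⟨h1, h2⟩
    have h0 : b 0 ≠ 0 := by
      intro h0
      exact hb (funext fun i => by fin_cases i <;> assumption)
    exact hLA (lineSet_eq_lA b h1 h2 h0)
  have part2 : ∀ g ∈ Gset, (act g '' lineSet b) ∩ lA = lineSet b ∩ lA := by
    rintro g ⟨t, s₀, s₁, ht, hg⟩
    have hhg : !![t ^ 2, 0, 0; -s₀ * t, t⁻¹, 0; -s₁ * t, 0, t⁻¹] *
        (g : Matrix (Fin 3) (Fin 3) ℂ) = 1 := by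
      rw [hg]; exact ginv t s₀ s₁ ht
    rw [image_lineSet g _ hhg, gvecMul]
    apply inter_lA_eq (inv_ne_zero ht) <;> simp
  refine ⟨?_, part2⟩
  ext L'
  simp only [Set.mem_setOf_eq]
  constructor
  · rintro ⟨g, hgG, rfl⟩
    obtain ⟨t, s₀, s₁, ht, hg⟩ := hgG
    have hhg : !![t ^ 2, 0, 0; -s₀ * t, t⁻¹, 0; -s₁ * t, 0, t⁻¹] *
        (g : Matrix (Fin 3) (Fin 3) ℂ) = 1 := by
      rw [hg]; exact ginv t s₀ s₁ ht
    rw [image_lineSet g _ hhg, gvecMul]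
    refine ⟨⟨_, ?_, rfl⟩, ?_, ?_⟩
    · intro h0
      rw [funext_iff] at h0
      have h1 := h0 1; have h2 := h0 2
      simp only [Matrix.cons_val_one, Matrix.head_cons, Pi.zero_apply] at h1 h2
      simp only [Matrix.cons_val_two, Matrix.tail_cons, Matrix.head_cons] at h2
      exact hb12 ⟨by
        rcases mul_eq_zero.mp h1 with h | h
        · exact absurd h (inv_ne_zero ht)
        · exact h, by
        rcases mul_eq_zero.mp h2 with h | h
        · exact absurd h (inv_ne_zero ht)
        · exact h⟩
    · intro heq
      obtain ⟨h1, h2⟩ := lA_coeffs _ heq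
      simp only [Matrix.cons_val_one, Matrix.head_cons] at h1
      simp only [Matrix.cons_val_two, Matrix.tail_cons, Matrix.head_cons] at h2
      exact hb12 ⟨by
        rcases mul_eq_zero.mp h1 with h | h
        · exact absurd h (inv_ne_zero ht)
        · exact h, by
        rcases mul_eq_zero.mp h2 with h | h
        · exact absurd h (inv_ne_zero ht)
        · exact h⟩
    · apply inter_lA_eq (inv_ne_zero ht) <;> simp
  · rintro ⟨⟨c, hc, rfl⟩, hne, hint⟩
    have hc12 : ¬ (c 1 = 0 ∧ c 2 = 0) := by
      rintro ⟨h1, h2⟩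
      have h0 : c 0 ≠ 0 := by
        intro h0
        exact hc (funext fun i => by fin_cases i <;> assumption)
      exact hne (lineSet_eq_lA c h1 h2 h0)
    obtain ⟨k, hk, h1, h2⟩ := prop_of_inter b c hb12 hc12 hint
    obtain ⟨s₀, s₁, hs⟩ : ∃ s₀ s₁ : ℂ, s₀ * b 1 + s₁ * b 2 = b 0 - k⁻¹ * c 0 := by
      by_cases hb1 : b 1 = 0
      · have hb2 : b 2 ≠ 0 := fun h => hb12 ⟨hb1, h⟩
        exact ⟨0, (b 0 - k⁻¹ * c 0) / b 2, by field_simp; ring⟩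
      · exact ⟨(b 0 - k⁻¹ * c 0) / b 1, 0, by field_simp; ring⟩
    refine ⟨⟨!![((1:ℂ) ^ 2)⁻¹, 0, 0; s₀, 1, 0; s₁, 0, 1], gdet 1 s₀ s₁ one_ne_zero⟩,
      ⟨1, s₀, s₁, one_ne_zero, rfl⟩, ?_⟩
    have hhg : !![(1:ℂ) ^ 2, 0, 0; -s₀ * 1, (1:ℂ)⁻¹, 0; -s₁ * 1, 0, (1:ℂ)⁻¹] *
        ((⟨!![((1:ℂ) ^ 2)⁻¹, 0, 0; s₀, 1, 0; s₁, 0, 1], gdet 1 s₀ s₁ one_ne_zero⟩ : SL3) :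
          Matrix (Fin 3) (Fin 3) ℂ) = 1 := ginv 1 s₀ s₁ one_ne_zero
    rw [image_lineSet _ _ hhg, gvecMul]
    have hfun : (![b 0 * 1 ^ 2 - b 1 * s₀ * 1 - b 2 * s₁ * 1,
        (1:ℂ)⁻¹ * b 1, (1:ℂ)⁻¹ * b 2] : Fin 3 → ℂ) = k⁻¹ • c := by
      funext j
      fin_cases j
      · show b 0 * 1 ^ 2 - b 1 * s₀ * 1 - b 2 * s₁ * 1 = k⁻¹ * c 0
        linear_combination -hs
      · show (1:ℂ)⁻¹ * b 1 = k⁻¹ * c 1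
        rw [h1]
        field_simp
        try ring
      · show (1:ℂ)⁻¹ * b 2 = k⁻¹ * c 2
        rw [h2]
        field_simp
        try ring
    rw [hfun, lineSet_smul (inv_ne_zero hk)]
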